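/- For a quadratic ζ ∈ S²V' with associated symmetric antilinear map Z, the Gaussian e^Z := Σₙ ζⁿ/n! ∈ SV' satisfies a(v)e^Z = (Zv)·e^Z for every v ∈ V, where the product on the right is the commutative product of SV' induced by the coproduct of SV. -/

import Mathlib

open scoped ComplexConjugate

noncomputable section

section Defs

variable {V W A : Type} [AddCommGroup V] [Module ℂ V] [CommRing A] [Algebra ℂ A]

/-- `A` (with embedding `ι`) is the symmetric algebra of `V`: universal property. -/
def IsSymmAlg (ι : V →ₗ[ℂ] A) : Prop :=
  ∀ (B : Type) [CommRing B] [Algebra ℂ B] (f : V →ₗ[ℂ] B),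
    ∃! F : A →ₐ[ℂ] B, ∀ v, F (ι v) = f v

/-- The span of `n`-fold products of generators: the degree-`n` part. -/
def GradeOf (gen : W → A) (n : ℕ) : Submodule ℂ A :=
  Submodule.span ℂ {a | ∃ f : Fin n → W, a = ∏ i, gen (f i)}

/-- The algebra is spanned by products of generators. -/
def SpanProdsOf (gen : W → A) : Prop :=
  ∀ x : A, x ∈ Submodule.span ℂ {a | ∃ (n : ℕ) (f : Fin n → W), a = ∏ i, gen (f i)}

/-- A quadratic: an antilinear functional concentrated in degree 2. -/
def IsQuadOf (gen : W → A) (ζ : A →ₗ⋆[ℂ] ℂ) : Prop :=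
  ∀ n : ℕ, n ≠ 2 → ∀ φ ∈ GradeOf gen n, ζ φ = 0

/-- The commutative product on the full antidual induced by the coproduct,
characterized on products of generators. -/
def IsConvProdOf (gen : W → A)
    (mul : (A →ₗ⋆[ℂ] ℂ) → (A →ₗ⋆[ℂ] ℂ) → (A →ₗ⋆[ℂ] ℂ)) : Prop :=
  ∀ (Φ Ψ : A →ₗ⋆[ℂ] ℂ) (n : ℕ) (v : Fin n → W),
    mul Φ Ψ (∏ i, gen (v i)) =
      ∑ S : Finset (Fin n), Φ (∏ i ∈ S, gen (v i)) * Ψ (∏ i ∈ Sᶜ, gen (v i))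

/-- The counit (unit of the antidual algebra): kills products of at least one generator. -/
def IsCounitOf (gen : W → A) (ε : A →ₗ⋆[ℂ] ℂ) : Prop :=
  ∀ (n : ℕ) (v : Fin n → W), ε (∏ i, gen (v i)) = if n = 0 then 1 else 0

/-- Powers of a functional with respect to the convolution product. -/
def powD (mul : (A →ₗ⋆[ℂ] ℂ) → (A →ₗ⋆[ℂ] ℂ) → (A →ₗ⋆[ℂ] ℂ))
    (ε ζ : A →ₗ⋆[ℂ] ℂ) : ℕ → (A →ₗ⋆[ℂ] ℂ)
  | 0 => ε
  | n + 1 => mul ζ (powD mul ε ζ n)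

/-- `E` is the Gaussian `exp ζ = Σ ζⁿ/n!` (a finite sum in each degree). -/
def IsGaussianOf (gen : W → A)
    (mul : (A →ₗ⋆[ℂ] ℂ) → (A →ₗ⋆[ℂ] ℂ) → (A →ₗ⋆[ℂ] ℂ))
    (ε ζ E : A →ₗ⋆[ℂ] ℂ) : Prop :=
  ∀ k : ℕ, ∀ ψ ∈ GradeOf gen k,
    E ψ = ∑ n ∈ Finset.range (k + 1), ((n.factorial : ℂ))⁻¹ * powD mul ε ζ n ψ

end Defs

section Defs2

variable {V A : Type} [NormedAddCommGroup V] [InnerProductSpace ℂ V]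
  [CommRing A] [Algebra ℂ A]

/-- The family of annihilation operators: derivations killing `1` with
`a v (ι w) = ⟨v|w⟩ 1`. -/
def IsAnn (ι : V →ₗ[ℂ] A) (a : V → A →ₗ[ℂ] A) : Prop :=
  ∀ v : V, (∀ x y : A, a v (x * y) = a v x * y + x * a v y) ∧
    a v 1 = 0 ∧ ∀ w : V, a v (ι w) = (inner ℂ v w : ℂ) • (1 : A)

/-- The canonical inner product on the symmetric algebra: graded pieces are
orthogonal and the permanent formula holds. (Antilinear in the first slot.) -/
def IsCanonInner (ι : V →ₗ[ℂ] A) (Bf : A →ₗ⋆[ℂ] A →ₗ[ℂ] ℂ) : Prop :=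
  (∀ (k n : ℕ), k ≠ n → ∀ (x : Fin k → V) (y : Fin n → V),
      Bf (∏ i, ι (x i)) (∏ i, ι (y i)) = 0) ∧
  ∀ (n : ℕ) (x y : Fin n → V),
      Bf (∏ i, ι (x i)) (∏ i, ι (y i)) =
        ∑ p : Equiv.Perm (Fin n), ∏ i, (inner ℂ (x i) (y (p i)) : ℂ)

/-- Iterated annihilation `a(vₙ)⋯a(v₁)φ` (applying `a(v₁)` first). -/
def iterAnn (a : V → A →ₗ[ℂ] A) : (n : ℕ) → (Fin n → V) → A → A
  | 0, _, φ => φ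
  | n + 1, v, φ => a (v (Fin.last n)) (iterAnn a n (fun i => v i.castSucc) φ)

/-- A symmetric bi-antilinear map `V × V → ℂ`. -/
def IsSymAnti (Z : V → V → ℂ) : Prop :=
  (∀ x y, Z x y = Z y x) ∧
  (∀ x y y', Z x (y + y') = Z x y + Z x y') ∧
  (∀ (c : ℂ) (x y : V), Z x (c • y) = conj c * Z x y)

end Defs2

section Aux


lemma aux_map_sdiff {α β : Type*} [DecidableEq α] [DecidableEq β] (e : α ↪ β)
    (s t : Finset α) : (s \ t).map e = s.map e \ t.map e := by
  ext x
  simp only [Finset.mem_map, Finset.mem_sdiff]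
  constructor
  · rintro ⟨a, ⟨has, hat⟩, rfl⟩
    exact ⟨⟨a, has, rfl⟩, fun ⟨b, hbt, hbe⟩ => hat (e.injective hbe ▸ hbt)⟩
  · rintro ⟨⟨a, has, rfl⟩, h⟩
    exact ⟨a, ⟨has, fun hat => h ⟨a, hat, rfl⟩⟩, rfl⟩

lemma aux_sum_powerset_map {M : Type*} [AddCommMonoid M] {α β : Type*} [DecidableEq α]
    [DecidableEq β] (e : α ↪ β) (U : Finset α) (f : Finset β → M) :
    ∑ S ∈ (U.map e).powerset, f S = ∑ S ∈ U.powerset, f (S.map e) := by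
  symm
  refine Finset.sum_nbij' (fun S => S.map e)
    (fun S => S.preimage e e.injective.injOn) ?_ ?_ ?_ ?_ ?_
  · intro S hS
    exact Finset.mem_powerset.2 (Finset.map_subset_map.2 (Finset.mem_powerset.1 hS))
  · intro S hS
    refine Finset.mem_powerset.2 ?_
    intro x hx
    have : e x ∈ U.map e := (Finset.mem_powerset.1 hS) (Finset.mem_preimage.1 hx)
    rcases Finset.mem_map.1 this with ⟨y, hy, hye⟩
    rwa [← e.injective hye]
  · intro S _
    exact Finset.preimage_map e S
  · intro S hS
    ext x
    simp only [Finset.mem_map, Finset.mem_preimage]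
    constructor
    · rintro ⟨a, ha, rfl⟩; exact ha
    · intro hx
      rcases Finset.mem_map.1 ((Finset.mem_powerset.1 hS) hx) with ⟨a, _, rfl⟩
      exact ⟨a, hx, rfl⟩
  · intro S _
    rfl

variable {V A : Type} [NormedAddCommGroup V] [InnerProductSpace ℂ V]
  [CommRing A] [Algebra ℂ A] (ι : V →ₗ[ℂ] A)

lemma aux_ext (hspan : SpanProdsOf fun w => ι w) {Φ Ψ : A →ₗ⋆[ℂ] ℂ}
    (h : ∀ (n : ℕ) (w : Fin n → V), Φ (∏ i, ι (w i)) = Ψ (∏ i, ι (w i))) : Φ = Ψ := by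
  ext x
  let p : Submodule ℂ A :=
  { carrier := {a | Φ a = Ψ a}
    add_mem' := fun {a b} ha hb => by
      simp only [Set.mem_setOf_eq, map_add] at *
      rw [ha, hb]
    zero_mem' := by simp
    smul_mem' := fun c a ha => by
      simp only [Set.mem_setOf_eq, map_smulₛₗ] at *
      rw [ha] }
  have hle : Submodule.span ℂ {a | ∃ (n : ℕ) (f : Fin n → V), a = ∏ i, ι (f i)} ≤ p := by
    rw [Submodule.span_le]
    rintro a ⟨n, f, rfl⟩
    exact h n f
  exact hle (hspan x)

lemma aux_finset_eq_map {n : ℕ} (T : Finset (Fin n)) :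
    T = Finset.map (T.orderEmbOfFin rfl).toEmbedding Finset.univ := by
  ext x
  simp only [Finset.mem_map, Finset.mem_univ, true_and, RelEmbedding.coe_toEmbedding]
  constructor
  · intro hx
    have : x ∈ Set.range (T.orderEmbOfFin rfl) := by
      rw [Finset.range_orderEmbOfFin]; exact hx
    exact this
  · rintro ⟨j, rfl⟩; exact Finset.orderEmbOfFin_mem T rfl j

lemma aux_prodT {n : ℕ} (w : Fin n → V) (T : Finset (Fin n)) :
    ∏ i ∈ T, ι (w i) = ∏ j : Fin T.card, ι (w (T.orderEmbOfFin rfl j)) := by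
  conv_lhs => rw [aux_finset_eq_map T]
  rw [Finset.prod_map]
  rfl

lemma aux_grade {n : ℕ} (w : Fin n → V) (T : Finset (Fin n)) :
    (∏ i ∈ T, ι (w i)) ∈ GradeOf (fun w => ι w) T.card := by
  rw [aux_prodT]
  exact Submodule.subset_span ⟨fun j => w (T.orderEmbOfFin rfl j), rfl⟩

lemma aux_quad {ζ : A →ₗ⋆[ℂ] ℂ} (hζ : IsQuadOf (fun w => ι w) ζ) {n : ℕ}
    (w : Fin n → V) (T : Finset (Fin n)) (h : T.card ≠ 2) :
    ζ (∏ i ∈ T, ι (w i)) = 0 :=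
  hζ T.card h _ (aux_grade ι w T)

lemma aux_eps {ε : A →ₗ⋆[ℂ] ℂ} (hε : IsCounitOf (fun w => ι w) ε) {n : ℕ}
    (w : Fin n → V) (T : Finset (Fin n)) :
    ε (∏ i ∈ T, ι (w i)) = if T.card = 0 then 1 else 0 := by
  rw [aux_prodT]
  exact hε T.card _

variable {mul : (A →ₗ⋆[ℂ] ℂ) → (A →ₗ⋆[ℂ] ℂ) → (A →ₗ⋆[ℂ] ℂ)}

lemma aux_mulOn (hmul : IsConvProdOf (fun w => ι w) mul) (Φ Ψ : A →ₗ⋆[ℂ] ℂ)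
    {n : ℕ} (w : Fin n → V) (T : Finset (Fin n)) :
    mul Φ Ψ (∏ i ∈ T, ι (w i)) =
      ∑ S ∈ T.powerset, Φ (∏ i ∈ S, ι (w i)) * Ψ (∏ i ∈ T \ S, ι (w i)) := by
  set e := (T.orderEmbOfFin rfl).toEmbedding with he
  have h1 : mul Φ Ψ (∏ i ∈ T, ι (w i)) =
      ∑ S' : Finset (Fin T.card),
        Φ (∏ j ∈ S', ι (w (e j))) * Ψ (∏ j ∈ S'ᶜ, ι (w (e j))) := by
    rw [aux_prodT ι w T]
    exact hmul Φ Ψ T.card fun j => w (e j)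
  rw [h1]
  have h2 : ∑ S ∈ T.powerset, Φ (∏ i ∈ S, ι (w i)) * Ψ (∏ i ∈ T \ S, ι (w i)) =
      ∑ S' ∈ (Finset.univ : Finset (Fin T.card)).powerset,
        Φ (∏ i ∈ S'.map e, ι (w i)) *
          Ψ (∏ i ∈ Finset.map e Finset.univ \ S'.map e, ι (w i)) := by
    conv_lhs => rw [aux_finset_eq_map T]
    rw [← he, aux_sum_powerset_map e Finset.univ
      (fun S => Φ (∏ i ∈ S, ι (w i)) * Ψ (∏ i ∈ Finset.map e Finset.univ \ S, ι (w i)))]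
  rw [h2, Finset.powerset_univ]
  refine Finset.sum_congr rfl fun S' _ => ?_
  rw [← aux_map_sdiff, ← Finset.compl_eq_univ_sdiff, Finset.prod_map, Finset.prod_map]

lemma aux_comm (hspan : SpanProdsOf fun w => ι w)
    (hmul : IsConvProdOf (fun w => ι w) mul) (Φ Ψ : A →ₗ⋆[ℂ] ℂ) :
    mul Φ Ψ = mul Ψ Φ := by
  apply aux_ext ι hspan
  intro n w
  have h1 := hmul Φ Ψ n w
  have h2 := hmul Ψ Φ n w
  refine h1.trans (Eq.trans ?_ h2.symm)
  refine Finset.sum_nbij' (fun S => Sᶜ) (fun S => Sᶜ) (fun _ _ => Finset.mem_univ _)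
    (fun _ _ => Finset.mem_univ _) (fun S _ => compl_compl S) (fun S _ => compl_compl S)
    fun S _ => ?_
  rw [compl_compl, mul_comm]

lemma aux_assoc (hspan : SpanProdsOf fun w => ι w)
    (hmul : IsConvProdOf (fun w => ι w) mul) (Φ Ψ Θ : A →ₗ⋆[ℂ] ℂ) :
    mul (mul Φ Ψ) Θ = mul Φ (mul Ψ Θ) := by
  apply aux_ext ι hspan
  intro n w
  have h1 := hmul (mul Φ Ψ) Θ n w
  have h2 := hmul Φ (mul Ψ Θ) n w
  rw [h1, h2]
  have hL : ∀ S : Finset (Fin n),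
      mul Φ Ψ (∏ i ∈ S, ι (w i)) * Θ (∏ i ∈ Sᶜ, ι (w i)) =
        ∑ T ∈ S.powerset,
          Φ (∏ i ∈ T, ι (w i)) * Ψ (∏ i ∈ S \ T, ι (w i)) * Θ (∏ i ∈ Sᶜ, ι (w i)) := by
    intro S
    rw [aux_mulOn ι hmul Φ Ψ w S, Finset.sum_mul]
  have hR : ∀ T : Finset (Fin n),
      Φ (∏ i ∈ T, ι (w i)) * mul Ψ Θ (∏ i ∈ Tᶜ, ι (w i)) =
        ∑ U ∈ Tᶜ.powerset,
          Φ (∏ i ∈ T, ι (w i)) * (Ψ (∏ i ∈ U, ι (w i)) * Θ (∏ i ∈ Tᶜ \ U, ι (w i))) := by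
    intro T
    rw [aux_mulOn ι hmul Ψ Θ w Tᶜ, Finset.mul_sum]
  simp only [hL, hR]
  rw [Finset.sum_comm' (t' := Finset.univ)
    (s' := fun T => Finset.univ.filter fun S => T ⊆ S)
    (fun S T => by simp [Finset.mem_powerset])]
  refine Finset.sum_congr rfl fun T _ => ?_
  refine Finset.sum_nbij' (fun S => S \ T) (fun U => T ∪ U) ?_ ?_ ?_ ?_ ?_
  · intro S hS
    simp only [Finset.mem_filter] at hS
    refine Finset.mem_powerset.2 ?_
    intro x hx
    simp only [Finset.mem_sdiff] at hx
    exact Finset.mem_compl.2 hx.2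
  · intro U hU
    simp only [Finset.mem_filter]
    exact ⟨Finset.mem_univ _, Finset.subset_union_left⟩
  · intro S hS
    simp only [Finset.mem_filter] at hS
    exact Finset.union_sdiff_of_subset hS.2
  · intro U hU
    refine Finset.union_sdiff_cancel_left ?_
    rw [Finset.disjoint_left]
    intro x hxT hxU
    exact Finset.mem_compl.1 ((Finset.mem_powerset.1 hU) hxU) hxT
  · intro S hS
    simp only [Finset.mem_filter] at hS
    have hc : Sᶜ = Tᶜ \ (S \ T) := by
      have hsub := hS.2
      ext x
      simp only [Finset.mem_compl, Finset.mem_sdiff]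
      constructor
      · intro h
        exact ⟨fun hxT => h (hsub hxT), fun h2 => h h2.1⟩
      · rintro ⟨hxT, h2⟩ hxS
        exact h2 ⟨hxS, hxT⟩
    rw [hc, mul_assoc]

/-- The annihilation operator on the antidual: `(auxD v Φ)(ψ) = Φ(ι v * ψ)`. -/
def auxD (v : V) (Φ : A →ₗ⋆[ℂ] ℂ) : A →ₗ⋆[ℂ] ℂ :=
  Φ.comp (LinearMap.mulLeft ℂ (ι v))

lemma auxD_apply (v : V) (Φ : A →ₗ⋆[ℂ] ℂ) (ψ : A) :
    auxD ι v Φ ψ = Φ (ι v * ψ) := rfl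

lemma aux_prod_cons {n : ℕ} (v : V) (w : Fin n → V) :
    ι v * ∏ i, ι (w i) = ∏ i, ι ((Fin.cons v w : Fin (n + 1) → V) i) := by
  have h : ∀ i : Fin (n + 1),
      ι ((Fin.cons v w : Fin (n + 1) → V) i) =
        (Fin.cons (ι v) (fun j => ι (w j)) : Fin (n + 1) → A) i := by
    intro i
    refine Fin.cases ?_ ?_ i
    · simp
    · intro j; simp
  rw [Finset.prod_congr rfl fun i _ => h i, Fin.prod_cons]

lemma aux_leibniz (hspan : SpanProdsOf fun w => ι w)
    (hmul : IsConvProdOf (fun w => ι w) mul) (v : V) (Φ Ψ : A →ₗ⋆[ℂ] ℂ) :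
    auxD ι v (mul Φ Ψ) = mul (auxD ι v Φ) Ψ + mul Φ (auxD ι v Ψ) := by
  apply aux_ext ι hspan
  intro n w
  set se : Fin n ↪ Fin (n + 1) := ⟨Fin.succ, Fin.succ_injective n⟩ with hse
  set c : Fin (n + 1) → V := Fin.cons v w with hc
  have hstep : ∀ S : Finset (Fin n), ∏ i ∈ S.map se, ι (c i) = ∏ j ∈ S, ι (w j) := by
    intro S
    rw [Finset.prod_map]
    exact Finset.prod_congr rfl fun j _ => by simp [hc, hse]
  have h0 : ∀ S : Finset (Fin n), (0 : Fin (n + 1)) ∉ S.map se := by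
    intro S h
    rcases Finset.mem_map.1 h with ⟨a, _, ha⟩
    exact Fin.succ_ne_zero a ha
  have hins : ∀ S : Finset (Fin n),
      ∏ i ∈ insert 0 (S.map se), ι (c i) = ι v * ∏ j ∈ S, ι (w j) := by
    intro S
    rw [Finset.prod_insert (h0 S), hstep]
    simp [hc]
  have hmemmap : ∀ (S : Finset (Fin n)) (y : Fin n), se y ∈ S.map se ↔ y ∈ S := by
    intro S y
    constructor
    · intro h
      rcases Finset.mem_map.1 h with ⟨a, ha, hae⟩
      rwa [← se.injective hae]
    · intro h
      exact Finset.mem_map_of_mem se h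
  have hcompl1 : ∀ S : Finset (Fin n), (S.map se)ᶜ = insert 0 (Sᶜ.map se) := by
    intro S
    ext x
    refine Fin.cases ?_ ?_ x
    · simp [h0 S]
    · intro y
      have hy : (Fin.succ y : Fin (n + 1)) = se y := rfl
      rw [Finset.mem_compl, hy, hmemmap, Finset.mem_insert, hmemmap, Finset.mem_compl]
      simp [← hy, Fin.succ_ne_zero]
  have hcompl2 : ∀ S : Finset (Fin n), (insert 0 (S.map se))ᶜ = Sᶜ.map se := by
    intro S
    ext x
    refine Fin.cases ?_ ?_ x
    · simp [h0 Sᶜ]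
    · intro y
      have hy : (Fin.succ y : Fin (n + 1)) = se y := rfl
      rw [Finset.mem_compl, Finset.mem_insert, hy, hmemmap, hmemmap, Finset.mem_compl]
      simp [← hy, Fin.succ_ne_zero]
  have huniv : (Finset.univ : Finset (Fin (n + 1))) = insert 0 (Finset.univ.map se) := by
    rw [Fin.univ_succ, Finset.cons_eq_insert]
  calc auxD ι v (mul Φ Ψ) (∏ i, ι (w i))
      = mul Φ Ψ (∏ i, ι (c i)) := by
        rw [auxD_apply, hc]
        exact congrArg _ (aux_prod_cons ι v w)
    _ = ∑ S : Finset (Fin (n + 1)), Φ (∏ i ∈ S, ι (c i)) * Ψ (∏ i ∈ Sᶜ, ι (c i)) :=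
        hmul Φ Ψ (n + 1) c
    _ = ∑ S ∈ (Finset.univ : Finset (Fin (n + 1))).powerset,
          Φ (∏ i ∈ S, ι (c i)) * Ψ (∏ i ∈ Sᶜ, ι (c i)) := by rw [Finset.powerset_univ]
    _ = (∑ S ∈ (Finset.univ.map se).powerset, Φ (∏ i ∈ S, ι (c i)) * Ψ (∏ i ∈ Sᶜ, ι (c i)))
          + ∑ S ∈ (Finset.univ.map se).powerset,
              Φ (∏ i ∈ insert 0 S, ι (c i)) * Ψ (∏ i ∈ (insert 0 S)ᶜ, ι (c i)) := by
        rw [huniv, Finset.sum_powerset_insert (h0 Finset.univ)]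
    _ = (∑ S : Finset (Fin n), Φ (∏ i ∈ S, ι (w i)) * (auxD ι v Ψ) (∏ i ∈ Sᶜ, ι (w i)))
          + ∑ S : Finset (Fin n), (auxD ι v Φ) (∏ i ∈ S, ι (w i)) * Ψ (∏ i ∈ Sᶜ, ι (w i)) := by
        rw [aux_sum_powerset_map se, aux_sum_powerset_map se, Finset.powerset_univ]
        congr 1
        · refine Finset.sum_congr rfl fun S _ => ?_
          rw [hstep, hcompl1, hins, auxD_apply]
        · refine Finset.sum_congr rfl fun S _ => ?_
          rw [hins, hcompl2, hstep, auxD_apply]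
    _ = (mul (auxD ι v Φ) Ψ + mul Φ (auxD ι v Ψ)) (∏ i, ι (w i)) := by
        rw [LinearMap.add_apply, add_comm]
        congr 1
        · exact (hmul (auxD ι v Φ) Ψ n w).symm
        · exact (hmul Φ (auxD ι v Ψ) n w).symm

lemma aux_mul_zero (hspan : SpanProdsOf fun w => ι w)
    (hmul : IsConvProdOf (fun w => ι w) mul) (Φ : A →ₗ⋆[ℂ] ℂ) :
    mul Φ 0 = 0 := by
  apply aux_ext ι hspan
  intro n w
  rw [hmul Φ 0 n w]
  simp

lemma aux_mul_smul (hspan : SpanProdsOf fun w => ι w)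
    (hmul : IsConvProdOf (fun w => ι w) mul) (c : ℂ) (Φ Ψ : A →ₗ⋆[ℂ] ℂ) :
    mul Φ (c • Ψ) = c • mul Φ Ψ := by
  apply aux_ext ι hspan
  intro n w
  rw [hmul Φ (c • Ψ) n w, LinearMap.smul_apply, hmul Φ Ψ n w, Finset.smul_sum]
  refine Finset.sum_congr rfl fun S _ => ?_
  simp only [LinearMap.smul_apply, smul_eq_mul]
  ring

variable {ε ζ E : A →ₗ⋆[ℂ] ℂ}

lemma aux_D_eps (hspan : SpanProdsOf fun w => ι w)
    (hε : IsCounitOf (fun w => ι w) ε) (v : V) : auxD ι v ε = 0 := by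
  apply aux_ext ι hspan
  intro n w
  rw [auxD_apply, aux_prod_cons ι v w, LinearMap.zero_apply]
  exact (hε (n + 1) (Fin.cons v w)).trans (by simp)

lemma aux_D_zeta {zv : V → (A →ₗ⋆[ℂ] ℂ)} (hzv : ∀ v : V, ∀ ψ : A, zv v ψ = ζ (ι v * ψ))
    (v : V) : auxD ι v ζ = zv v :=
  LinearMap.ext fun ψ => (hzv v ψ).symm

lemma aux_vanish (hmul : IsConvProdOf (fun w => ι w) mul)
    (hε : IsCounitOf (fun w => ι w) ε) (hζ : IsQuadOf (fun w => ι w) ζ) :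
    ∀ (m n : ℕ) (w : Fin n → V) (T : Finset (Fin n)), 2 * m ≠ T.card →
      powD mul ε ζ m (∏ i ∈ T, ι (w i)) = 0 := by
  intro m
  induction m with
  | zero =>
    intro n w T hT
    show ε _ = 0
    rw [aux_eps ι hε w T, if_neg (by omega)]
  | succ m ih =>
    intro n w T hT
    show mul ζ (powD mul ε ζ m) _ = 0
    rw [aux_mulOn ι hmul ζ (powD mul ε ζ m) w T]
    refine Finset.sum_eq_zero fun S hS => ?_
    by_cases h2 : S.card = 2
    · have hsub := Finset.mem_powerset.1 hS
      have hcard : (T \ S).card = T.card - S.card := Finset.card_sdiff_of_subset hsub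
      have hle := Finset.card_le_card hsub
      have hne : 2 * m ≠ (T \ S).card := by omega
      rw [ih n w (T \ S) hne, mul_zero]
    · rw [aux_quad ι hζ w S h2, zero_mul]

lemma aux_Eeval (hmul : IsConvProdOf (fun w => ι w) mul)
    (hε : IsCounitOf (fun w => ι w) ε) (hζ : IsQuadOf (fun w => ι w) ζ)
    (hE : IsGaussianOf (fun w => ι w) mul ε ζ E) {n : ℕ} (w : Fin n → V)
    (T : Finset (Fin n)) (N : ℕ) (hN : T.card ≤ N) :
    E (∏ i ∈ T, ι (w i)) =
      ∑ m ∈ Finset.range (N + 1),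
        ((m.factorial : ℂ))⁻¹ * powD mul ε ζ m (∏ i ∈ T, ι (w i)) := by
  rw [hE T.card _ (aux_grade ι w T)]
  refine Finset.sum_subset (Finset.range_subset_range.2 (by omega)) ?_
  intro m hm hmnot
  simp only [Finset.mem_range] at hm hmnot
  have hne : 2 * m ≠ T.card := by omega
  rw [aux_vanish ι hmul hε hζ m n w T hne, mul_zero]

lemma aux_Dpow (hspan : SpanProdsOf fun w => ι w)
    (hmul : IsConvProdOf (fun w => ι w) mul) (hε : IsCounitOf (fun w => ι w) ε)
    {zv : V → (A →ₗ⋆[ℂ] ℂ)} (hzv : ∀ v : V, ∀ ψ : A, zv v ψ = ζ (ι v * ψ)) :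
    ∀ (m : ℕ) (v : V), auxD ι v (powD mul ε ζ (m + 1)) =
      ((m + 1 : ℕ) : ℂ) • mul (zv v) (powD mul ε ζ m) := by
  intro m
  induction m with
  | zero =>
    intro v
    show auxD ι v (mul ζ (powD mul ε ζ 0)) = _
    rw [aux_leibniz ι hspan hmul v ζ (powD mul ε ζ 0), aux_D_zeta ι hzv v,
      show auxD ι v (powD mul ε ζ 0) = 0 from aux_D_eps ι hspan hε v,
      aux_mul_zero ι hspan hmul, add_zero]
    simp
  | succ m ih =>
    intro v
    show auxD ι v (mul ζ (powD mul ε ζ (m + 1))) = _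
    rw [aux_leibniz ι hspan hmul v ζ (powD mul ε ζ (m + 1)), aux_D_zeta ι hzv v, ih v,
      aux_mul_smul ι hspan hmul]
    have hcomm : mul ζ (mul (zv v) (powD mul ε ζ m)) =
        mul (zv v) (mul ζ (powD mul ε ζ m)) := by
      rw [aux_comm ι hspan hmul ζ (mul (zv v) (powD mul ε ζ m)),
        aux_assoc ι hspan hmul (zv v) (powD mul ε ζ m) ζ,
        aux_comm ι hspan hmul (powD mul ε ζ m) ζ]
    rw [hcomm]
    have hpow : mul ζ (powD mul ε ζ m) = powD mul ε ζ (m + 1) := rfl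
    rw [hpow, show ((m + 1 + 1 : ℕ) : ℂ) = 1 + ((m + 1 : ℕ) : ℂ) by push_cast; ring,
      add_smul, one_smul]

end Aux

/-- For a quadratic `ζ` with associated symmetric map `Z` (so `ζ(xy) = Z x y`),
the Gaussian `e^Z = Σ ζⁿ/n!` satisfies `a(v)e^Z = (Zv)·e^Z`, the product being the
convolution product of `SV'` induced by the coproduct of `SV`; here `Zv` is
regarded as the degree-one functional `a(v)ζ ∈ SV'`. -/
theorem gaussian_annihilation {V A : Type}
    [NormedAddCommGroup V] [InnerProductSpace ℂ V]
    [CommRing A] [Algebra ℂ A] (ι : V →ₗ[ℂ] A) (hA : IsSymmAlg ι)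
    (hspan : SpanProdsOf fun w => ι w)
    (mul : (A →ₗ⋆[ℂ] ℂ) → (A →ₗ⋆[ℂ] ℂ) → (A →ₗ⋆[ℂ] ℂ))
    (hmul : IsConvProdOf (fun w => ι w) mul)
    (ε : A →ₗ⋆[ℂ] ℂ) (hε : IsCounitOf (fun w => ι w) ε)
    (ζ : A →ₗ⋆[ℂ] ℂ) (hζ : IsQuadOf (fun w => ι w) ζ)
    (Z : V → V → ℂ) (hZ : IsSymAnti Z) (hζZ : ∀ x y : V, ζ (ι x * ι y) = Z x y)
    (zv : V → (A →ₗ⋆[ℂ] ℂ)) (hzv : ∀ v : V, ∀ ψ : A, zv v ψ = ζ (ι v * ψ))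
    (E : A →ₗ⋆[ℂ] ℂ) (hE : IsGaussianOf (fun w => ι w) mul ε ζ E) :
    ∀ (v : V) (ψ : A), E (ι v * ψ) = mul (zv v) E ψ := by
  intro v ψ
  have hDvE : auxD ι v E = mul (zv v) E := by
    apply aux_ext ι hspan
    intro n w
    have hg : (ι v * ∏ i, ι (w i)) ∈ GradeOf (fun w => ι w) (n + 1) := by
      rw [aux_prod_cons ι v w]
      exact Submodule.subset_span ⟨Fin.cons v w, rfl⟩
    have hL : auxD ι v E (∏ i, ι (w i)) =
        ∑ m ∈ Finset.range (n + 2),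
          ((m.factorial : ℂ))⁻¹ * powD mul ε ζ m (ι v * ∏ i, ι (w i)) := by
      rw [auxD_apply]
      exact hE (n + 1) _ hg
    rw [hL, Finset.sum_range_succ']
    have hf0 : ((Nat.factorial 0 : ℂ))⁻¹ * powD mul ε ζ 0 (ι v * ∏ i, ι (w i)) = 0 := by
      show _ * ε _ = 0
      rw [aux_prod_cons ι v w,
        show ε (∏ i, ι ((Fin.cons v w : Fin (n + 1) → V) i)) = 0 from
          (hε (n + 1) (Fin.cons v w)).trans (by simp), mul_zero]
    rw [hf0, add_zero]
    have hterm : ∀ m ∈ Finset.range (n + 1),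
        ((Nat.factorial (m + 1) : ℂ))⁻¹ * powD mul ε ζ (m + 1) (ι v * ∏ i, ι (w i)) =
          ((m.factorial : ℂ))⁻¹ *
            ∑ S : Finset (Fin n),
              zv v (∏ i ∈ S, ι (w i)) * powD mul ε ζ m (∏ i ∈ Sᶜ, ι (w i)) := by
      intro m _
      have h1 : powD mul ε ζ (m + 1) (ι v * ∏ i, ι (w i)) =
          auxD ι v (powD mul ε ζ (m + 1)) (∏ i, ι (w i)) := rfl
      rw [h1, aux_Dpow ι hspan hmul hε hzv m v, LinearMap.smul_apply, smul_eq_mul,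
        ← mul_assoc]
      have hfac : ((Nat.factorial (m + 1) : ℂ))⁻¹ * ((m + 1 : ℕ) : ℂ) =
          ((m.factorial : ℂ))⁻¹ := by
        rw [Nat.factorial_succ]
        push_cast
        have h1 : ((m : ℂ) + 1) ≠ 0 := by
          exact Nat.cast_add_one_ne_zero m
        have h2 : ((m.factorial : ℂ)) ≠ 0 := by
          exact_mod_cast Nat.cast_ne_zero.2 m.factorial_ne_zero
        field_simp
      rw [hfac, hmul (zv v) (powD mul ε ζ m) n w]
    rw [Finset.sum_congr rfl hterm]
    have hswap : ∑ m ∈ Finset.range (n + 1), ((m.factorial : ℂ))⁻¹ *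
          ∑ S : Finset (Fin n),
            zv v (∏ i ∈ S, ι (w i)) * powD mul ε ζ m (∏ i ∈ Sᶜ, ι (w i)) =
        ∑ S : Finset (Fin n), zv v (∏ i ∈ S, ι (w i)) *
          ∑ m ∈ Finset.range (n + 1),
            ((m.factorial : ℂ))⁻¹ * powD mul ε ζ m (∏ i ∈ Sᶜ, ι (w i)) := by
      simp only [Finset.mul_sum]
      rw [Finset.sum_comm]
      refine Finset.sum_congr rfl fun S _ => Finset.sum_congr rfl fun m _ => by ring
    rw [hswap]
    have hrhs : mul (zv v) E (∏ i, ι (w i)) =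
        ∑ S : Finset (Fin n), zv v (∏ i ∈ S, ι (w i)) * E (∏ i ∈ Sᶜ, ι (w i)) :=
      hmul (zv v) E n w
    rw [hrhs]
    refine Finset.sum_congr rfl fun S _ => ?_
    congr 1
    rw [aux_Eeval ι hmul hε hζ hE w Sᶜ n
      (by simpa using Finset.card_le_univ Sᶜ)]
  calc E (ι v * ψ) = auxD ι v E ψ := rfl
    _ = mul (zv v) E ψ := by rw [hDvE]
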